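/- Let R = (R_i)_{i∈Ā} be an ε̄-local optimum (with equal weights 1/n) with respect to the endowed valuations v̄_i, with prices p_j as defined and ε̂ := (1+ε̄)^n − 1. Then: (a) p_j ≤ 1 for every item j ∈ J; (b) for every agent k ∈ Ā and every item j ∈ J ∖ R_k, v̄_k(R_k ∪ {j}) / v̄_k(R_k) ≤ (1+ε̂)·(1 + p_j); and (c) for every agent k ∈ Ā and every set T ⊆ J, v̄_k(R_k ∪ T) / v̄_k(R_k) ≤ 1 + Σ_{j∈T} (2ε̂ + p_j). -/

import Mathlib

open Finset

/-- (Properties of prices, symmetric case.)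
For an `ε̄`-local optimum `R` (with equal weights `1/n`) with prices `p` and
`ε̂ := (1+ε̄)^n − 1`:
(a) `p_j ≤ 1` for every item `j`;
(b) for every agent `k` and every item `j ∉ R_k`,
`v̄_k(R_k ∪ {j}) / v̄_k(R_k) ≤ (1+ε̂)·(1+p_j)`;
(c) for every agent `k` and every `T ⊆ J`,
`v̄_k(R_k ∪ T) / v̄_k(R_k) ≤ 1 + Σ_{j∈T} (2ε̂ + p_j)`. -/
theorem symmetric_local_opt_price_bounds {J A : Type*} [Fintype J] [DecidableEq J]
    [Fintype A] [Nonempty A]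
    (n : ℕ) (hn1 : 1 ≤ n) (hAn : Fintype.card A ≤ n)
    (v : A → Finset J → ℝ)
    (hmono : ∀ i, ∀ S T : Finset J, S ⊆ T → v i S ≤ v i T)
    (hsubmod : ∀ i, ∀ S T : Finset J, v i (S ∩ T) + v i (S ∪ T) ≤ v i S + v i T)
    (hv0 : ∀ i, v i ∅ = 0) (hvJ : ∀ i, 0 < v i (univ : Finset J))
    (ℓ : A → J) (hℓ : ∀ i, ∀ j : J, v i {j} ≤ v i {ℓ i})
    (vb : A → Finset J → ℝ) (hvb : ∀ i S, vb i S = v i {ℓ i} + v i S)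
    (R : A → Finset J)
    (hdisj : ∀ i k, i ≠ k → Disjoint (R i) (R k))
    (owner : J → A) (howner : ∀ j : J, j ∈ R (owner j))
    (ε' : ℝ) (hε' : 0 ≤ ε')
    (hloc : ∀ i k, i ≠ k → ∀ j ∈ R i,
      (vb i ((R i).erase j) / vb i (R i)) *
        (vb k (R k ∪ {j}) / vb k (R k)) ≤ (1 + ε') ^ n)
    (p : J → ℝ)
    (hp : ∀ j : J, p j =
      vb (owner j) (R (owner j)) / vb (owner j) ((R (owner j)).erase j) - 1)
    (ε'' : ℝ) (hε'' : ε'' = (1 + ε') ^ n - 1) :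
    (∀ j : J, p j ≤ 1) ∧
    (∀ (k : A) (j : J), j ∉ R k →
        vb k (R k ∪ {j}) / vb k (R k) ≤ (1 + ε'') * (1 + p j)) ∧
    (∀ (k : A) (T : Finset J),
        vb k (R k ∪ T) / vb k (R k) ≤ 1 + ∑ j ∈ T, (2 * ε'' + p j)) := by
  -- basic facts
  have hvnn : ∀ i (S : Finset J), 0 ≤ v i S := by
    intro i S
    have := hmono i ∅ S (Finset.empty_subset S)
    rw [hv0] at this; exact this
  have hε''0 : 0 ≤ ε'' := by
    have h1 : (1:ℝ) ≤ (1+ε')^n := one_le_pow₀ (by linarith)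
    rw [hε'']; linarith
  -- subadditivity over singletons
  have hsum : ∀ i (S : Finset J), v i S ≤ ∑ j ∈ S, v i {j} := by
    intro i S
    induction S using Finset.induction_on with
    | empty => simp [hv0]
    | @insert a s ha ih =>
      have hsub := hsubmod i {a} s
      have : ({a} : Finset J) ∩ s = ∅ := by
        simp [Finset.singleton_inter_of_notMem ha]
      rw [this, hv0] at hsub
      have : insert a s = {a} ∪ s := by rw [Finset.insert_eq]
      rw [this, Finset.sum_union (by simp [ha])]
      simp only [Finset.sum_singleton]
      linarith
  have hℓpos : ∀ i, 0 < v i {ℓ i} := by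
    intro i
    by_contra h
    push_neg at h
    have : ∀ j ∈ (univ : Finset J), v i {j} ≤ 0 := fun j _ => le_trans (hℓ i j) h
    have hsp := Finset.sum_nonpos this
    have := hsum i univ
    have := hvJ i
    linarith
  have hvbpos : ∀ i (S : Finset J), 0 < vb i S := by
    intro i S
    rw [hvb]
    have := hvnn i S
    have := hℓpos i
    linarith
  have hvbmono : ∀ i, ∀ S T : Finset J, S ⊆ T → vb i S ≤ vb i T := by
    intro i S T h; rw [hvb, hvb]; linarith [hmono i S T h]
  have hvbsub : ∀ i, ∀ S T : Finset J, vb i (S ∩ T) + vb i (S ∪ T) ≤ vb i S + vb i T := by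
    intro i S T; simp only [hvb]; linarith [hsubmod i S T]
  -- p is nonnegative
  have hp0 : ∀ j, 0 ≤ p j := by
    intro j
    rw [hp]
    have h1 := hvbpos (owner j) ((R (owner j)).erase j)
    have h2 := hvbmono (owner j) _ _ (Finset.erase_subset j (R (owner j)))
    have : (1:ℝ) ≤ vb (owner j) (R (owner j)) / vb (owner j) ((R (owner j)).erase j) :=
      (one_le_div h1).mpr h2
    linarith
  -- part (a)
  have parta : ∀ j : J, p j ≤ 1 := by
    intro j
    set i := owner j
    have hjle : v i (R i) ≤ v i ((R i).erase j) + v i {j} := by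
      have hsub := hsubmod i ((R i).erase j) {j}
      have h1 : ((R i).erase j) ∩ {j} = ∅ := by
        ext x; simp only [Finset.mem_inter, Finset.mem_erase, Finset.mem_singleton,
          Finset.notMem_empty, iff_false]
        rintro ⟨⟨hne, _⟩, hx⟩; exact hne hx
      rw [h1, hv0] at hsub
      have h2 : R i ⊆ ((R i).erase j) ∪ {j} := by
        intro x hx
        simp only [Finset.mem_union, Finset.mem_erase, Finset.mem_singleton]
        by_cases hxj : x = j
        · right; exact hxj
        · left; exact ⟨hxj, hx⟩
      have := hmono i _ _ h2
      linarith
    have hbound : vb i (R i) ≤ 2 * vb i ((R i).erase j) := by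
      rw [hvb, hvb]
      have := hℓ i j
      have := hvnn i ((R i).erase j)
      linarith
    have hpos := hvbpos i ((R i).erase j)
    rw [hp]
    have : vb i (R i) / vb i ((R i).erase j) ≤ 2 := by
      rw [div_le_iff₀ hpos]; linarith
    linarith
  refine ⟨parta, ?_, ?_⟩
  · -- part (b)
    intro k j hj
    set i := owner j with hi
    have hne : i ≠ k := by
      intro h; rw [h] at hi; exact hj (hi ▸ howner j)
    have key := hloc i k hne j (howner j)
    set a := vb i ((R i).erase j) with ha
    set b := vb i (R i) with hb
    have hapos : 0 < a := hvbpos i _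
    have hbpos : 0 < b := hvbpos i _
    have h1p : 1 + p j = b / a := by rw [hp]; ring
    set X := vb k (R k ∪ {j}) / vb k (R k) with hX
    have hstep : X ≤ (b / a) * (1 + ε') ^ n := by
      have heq : X = (b / a) * ((a / b) * X) := by
        field_simp
      rw [heq]
      exact mul_le_mul_of_nonneg_left key (by positivity)
    have he : (1 + ε'') = (1 + ε') ^ n := by rw [hε'']; ring
    rw [h1p, he]
    linarith [hstep]
  · -- part (c)
    have partb : ∀ (k : A) (j : J), j ∉ R k →
        vb k (R k ∪ {j}) / vb k (R k) ≤ (1 + ε'') * (1 + p j) := by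
      intro k j hj
      set i := owner j with hi
      have hne : i ≠ k := by
        intro h; rw [h] at hi; exact hj (hi ▸ howner j)
      have key := hloc i k hne j (howner j)
      set a := vb i ((R i).erase j) with ha
      set b := vb i (R i) with hb
      have hapos : 0 < a := hvbpos i _
      have hbpos : 0 < b := hvbpos i _
      have h1p : 1 + p j = b / a := by rw [hp]; ring
      set X := vb k (R k ∪ {j}) / vb k (R k) with hX
      have hstep : X ≤ (b / a) * (1 + ε') ^ n := by
        have heq : X = (b / a) * ((a / b) * X) := by field_simp
        rw [heq]
        exact mul_le_mul_of_nonneg_left key (by positivity)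
      have he : (1 + ε'') = (1 + ε') ^ n := by rw [hε'']; ring
      rw [h1p, he]
      linarith [hstep]
    intro k T
    have hRpos := hvbpos k (R k)
    -- marginal subadditivity
    have marg : ∀ T : Finset J,
        vb k (R k ∪ T) ≤ vb k (R k) + ∑ j ∈ T, (vb k (R k ∪ {j}) - vb k (R k)) := by
      intro T
      induction T using Finset.induction_on with
      | empty => simp
      | @insert a s ha ih =>
        have hsub := hvbsub k (R k ∪ s) (R k ∪ {a})
        have hRsub : R k ⊆ (R k ∪ s) ∩ (R k ∪ {a}) := by
          intro x hx; simp [hx]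
        have hmon := hvbmono k _ _ hRsub
        have hun : (R k ∪ s) ∪ (R k ∪ {a}) = R k ∪ insert a s := by
          ext x; simp [Finset.mem_union, Finset.mem_insert]; tauto
        rw [hun] at hsub
        rw [Finset.sum_insert ha]
        linarith
    -- per item bound
    have item : ∀ j : J, vb k (R k ∪ {j}) - vb k (R k) ≤ (2 * ε'' + p j) * vb k (R k) := by
      intro j
      by_cases hj : j ∈ R k
      · have : R k ∪ {j} = R k := by
          apply Finset.union_eq_left.mpr; simp [hj]
        rw [this]
        have := hp0 j
        nlinarith
      · have hb := partb k j hj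
        rw [div_le_iff₀ hRpos] at hb
        have hp1 := parta j
        have hpj0 := hp0 j
        nlinarith [mul_nonneg (mul_nonneg hε''0 (by linarith : (0:ℝ) ≤ 1 - p j)) hRpos.le]
    rw [div_le_iff₀ hRpos]
    have hsumle : ∑ j ∈ T, (vb k (R k ∪ {j}) - vb k (R k)) ≤
        ∑ j ∈ T, (2 * ε'' + p j) * vb k (R k) :=
      Finset.sum_le_sum (fun j _ => item j)
    have hmul : ∑ j ∈ T, (2 * ε'' + p j) * vb k (R k) =
        (∑ j ∈ T, (2 * ε'' + p j)) * vb k (R k) := (Finset.sum_mul _ _ _).symm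
    have hm := marg T
    rw [hmul] at hsumle
    have : (1 + ∑ j ∈ T, (2 * ε'' + p j)) * vb k (R k) =
        vb k (R k) + (∑ j ∈ T, (2 * ε'' + p j)) * vb k (R k) := by ring
    linarith
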